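/- Let M, Δt > 0, a > 0, Rⁿ > 0, and set Rⁿ⁺¹ = (−M/Δt + √((M/Δt)² + 4(M/Δt)·Rⁿ·a))/(2a). Then Rⁿ⁺¹ ≥ Rⁿ·(M/Δt)/((M/Δt) + a·Rⁿ), i.e. the decay of R at each step is controlled: Rⁿ − Rⁿ⁺¹ ≤ a·(Rⁿ)²·Δt/M · (M/Δt)/((M/Δt)+a·Rⁿ) in particular Rⁿ⁺¹ ≥ Rⁿ/(1 + a·Rⁿ·Δt/M). -/

import Mathlib

theorem stmt_6 (M Δt a Rn : ℝ) (hM : 0 < M) (hdt : 0 < Δt) (ha : 0 < a)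
    (hR : 0 < Rn) :
    let Rn1 : ℝ := (-(M / Δt) + Real.sqrt ((M / Δt) ^ 2 + 4 * (M / Δt) * Rn * a)) / (2 * a)
    Rn1 ≥ Rn * (M / Δt) / (M / Δt + a * Rn) ∧
      Rn - Rn1 ≤ a * Rn ^ 2 * Δt / M * ((M / Δt) / (M / Δt + a * Rn)) ∧
      Rn1 ≥ Rn / (1 + a * Rn * Δt / M) := by
  intro Rn1
  set m : ℝ := M / Δt with hm
  have hm0 : 0 < m := div_pos hM hdt
  have hden : 0 < m + a * Rn := by positivity
  set L : ℝ := Rn * m / (m + a * Rn) with hL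
  have hL0 : 0 < L := by positivity
  have hsq : Real.sqrt (m ^ 2 + 4 * m * Rn * a) ≥ m + 2 * a * L := by
    rw [ge_iff_le, show m + 2 * a * L = m + 2 * a * (Rn * m / (m + a * Rn)) from rfl]
    have h1 : (m + 2 * a * (Rn * m / (m + a * Rn))) ^ 2 ≤ m ^ 2 + 4 * m * Rn * a := by
      have key : (m + 2 * a * (Rn * m / (m + a * Rn))) ^ 2 * (m + a * Rn) ^ 2
          ≤ (m ^ 2 + 4 * m * Rn * a) * (m + a * Rn) ^ 2 := by
        have expand : (m + 2 * a * (Rn * m / (m + a * Rn))) * (m + a * Rn)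
            = m * (m + a * Rn) + 2 * a * Rn * m := by
          field_simp
        have : ((m + 2 * a * (Rn * m / (m + a * Rn))) * (m + a * Rn)) ^ 2
            = (m * (m + a * Rn) + 2 * a * Rn * m) ^ 2 := by rw [expand]
        calc (m + 2 * a * (Rn * m / (m + a * Rn))) ^ 2 * (m + a * Rn) ^ 2
            = (m * (m + a * Rn) + 2 * a * Rn * m) ^ 2 := by rw [← mul_pow, expand]
          _ ≤ (m ^ 2 + 4 * m * Rn * a) * (m + a * Rn) ^ 2 := by
              nlinarith [mul_pos hm0 (pow_pos (mul_pos ha hR) 3)]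
      have hpos2 : (0:ℝ) < (m + a * Rn) ^ 2 := by positivity
      exact le_of_mul_le_mul_right key hpos2
    calc m + 2 * a * (Rn * m / (m + a * Rn))
        = Real.sqrt ((m + 2 * a * (Rn * m / (m + a * Rn))) ^ 2) := by
          rw [Real.sqrt_sq (by positivity)]
      _ ≤ Real.sqrt (m ^ 2 + 4 * m * Rn * a) := Real.sqrt_le_sqrt h1
  have h1 : Rn1 ≥ L := by
    show (-(m) + Real.sqrt (m ^ 2 + 4 * m * Rn * a)) / (2 * a) ≥ L
    rw [ge_iff_le, le_div_iff₀ (by positivity)]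
    linarith [hsq]
  refine ⟨h1, ?_, ?_⟩
  · have heq : a * Rn ^ 2 * Δt / M * (m / (m + a * Rn)) = Rn - L := by
      rw [hL, hm]
      field_simp
      ring
    rw [heq]; linarith
  · have heq : Rn / (1 + a * Rn * Δt / M) = L := by
      rw [hL, hm]
      rw [div_eq_div_iff (by positivity) hden.ne']
      field_simp
      ring_nf
      linear_combination M * mul_inv_cancel₀ (show Δt ≠ 0 from hdt.ne')
    rw [heq]; exact h1
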